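/- The Weyl set is a closed disc with explicit center and radius: Let r ≥ 1, α ∈ ℂ, β ∈ ℂ^{1×r}, γ ∈ ℂ^{r×1}, and δ ∈ ℂ^{r×r} with I := Im(δ) positive definite. Then for every A ∈ ℂ^{r×r} with Im(A) positive semidefinite the matrix 1_r − δA is invertible, and the closure of the set { α + βA(1_r − δA)^{-1}γ : A ∈ ℂ^{r×r}, Im(A) positive semidefinite } ⊂ ℂ equals the closed disc with center α + (i/2)·βI^{-1}γ and radius (1/2)·‖I^{-1/2}β^*‖·‖I^{-1/2}γ‖, where ‖·‖ is the Euclidean norm on ℂ^r. -/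

import Mathlib

open Matrix
open scoped ComplexOrder

noncomputable section

/-- The imaginary part `(M − M^*)/(2i)` of a square complex matrix. -/
def matIm {n : Type*} (M : Matrix n n ℂ) : Matrix n n ℂ :=
  (2 * Complex.I)⁻¹ • (M - Mᴴ)

/-- The Euclidean norm on `ℂ^r`. -/
def evnorm {r : ℕ} (v : Fin r → ℂ) : ℝ :=
  Real.sqrt (∑ i, Complex.normSq (v i))

/-- The square root of a positive semidefinite matrix, as defined in the older Mathlib. -/
def Matrix.PosSemidef.sqrt {n : Type*} [Fintype n] [DecidableEq n] {A : Matrix n n ℂ}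
    (hA : A.PosSemidef) : Matrix n n ℂ :=
  hA.1.eigenvectorUnitary.1 * diagonal ((↑) ∘ (√·) ∘ hA.1.eigenvalues) *
    (star hA.1.eigenvectorUnitary : Matrix n n ℂ)

lemma Matrix.PosSemidef.sqrt_mul_self {n : Type*} [Fintype n] [DecidableEq n]
    {A : Matrix n n ℂ} (hA : A.PosSemidef) : hA.sqrt * hA.sqrt = A := by
  have hU : (star hA.1.eigenvectorUnitary : Matrix n n ℂ) * hA.1.eigenvectorUnitary.1 = 1 :=
    Unitary.coe_star_mul_self _
  have hD : diagonal ((↑) ∘ (√·) ∘ hA.1.eigenvalues) * diagonal ((↑) ∘ (√·) ∘ hA.1.eigenvalues)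
      = diagonal (RCLike.ofReal ∘ hA.1.eigenvalues : n → ℂ) := by
    rw [diagonal_mul_diagonal]; congr 1; funext i
    simp only [Function.comp_apply]
    rw [← Complex.ofReal_mul, Real.mul_self_sqrt (hA.eigenvalues_nonneg i)]; rfl
  conv_rhs => rw [hA.1.spectral_theorem, Unitary.conjStarAlgAut_apply]
  simp only [Matrix.PosSemidef.sqrt]
  rw [show ∀ P Q R X Y Z : Matrix n n ℂ, P * Q * R * (X * Y * Z) = P * Q * (R * X) * Y * Z from
    fun _ _ _ _ _ _ => by noncomm_ring, hU, Matrix.mul_one, Matrix.mul_assoc _ (diagonal _) (diagonal _), hD]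

lemma Matrix.PosSemidef.sqrt_conjTranspose {n : Type*} [Fintype n] [DecidableEq n]
    {A : Matrix n n ℂ} (hA : A.PosSemidef) : hA.sqrtᴴ = hA.sqrt := by
  simp only [Matrix.PosSemidef.sqrt, conjTranspose_mul, diagonal_conjTranspose,
    Matrix.mul_assoc]
  congr 2
  · ext i j
    simp [diagonal_apply]
  · simp [Unitary.coe_star, ← star_eq_conjTranspose]

section Helpers

lemma evnorm_nonneg {r : ℕ} (a : Fin r → ℂ) : 0 ≤ evnorm a := Real.sqrt_nonneg _

lemma evnorm_eq_norm {r : ℕ} (a : Fin r → ℂ) :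
    evnorm a = ‖(WithLp.equiv 2 (Fin r → ℂ)).symm a‖ := by
  rw [EuclideanSpace.norm_eq, evnorm]
  congr 1
  refine Finset.sum_congr rfl fun i _ => ?_
  rw [← Complex.sq_norm]; rfl

lemma evnorm_smul {r : ℕ} (c : ℂ) (a : Fin r → ℂ) :
    evnorm (c • a) = ‖c‖ * evnorm a := by
  rw [evnorm_eq_norm, evnorm_eq_norm]
  have e : (WithLp.equiv 2 (Fin r → ℂ)).symm (c • a)
      = c • (WithLp.equiv 2 (Fin r → ℂ)).symm a := rfl
  rw [e, norm_smul]

lemma evnorm_eq_zero {r : ℕ} {a : Fin r → ℂ} : evnorm a = 0 ↔ a = 0 := by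
  rw [evnorm_eq_norm, norm_eq_zero]
  constructor
  · intro h; have := congrArg (WithLp.equiv 2 (Fin r → ℂ)) h; simpa using this
  · intro h; rw [h]; simp

lemma dot_self_eq {r : ℕ} (a : Fin r → ℂ) : star a ⬝ᵥ a = ((evnorm a ^ 2 : ℝ) : ℂ) := by
  rw [evnorm, Real.sq_sqrt (Finset.sum_nonneg fun i _ => Complex.normSq_nonneg _)]
  rw [dotProduct]; push_cast
  exact Finset.sum_congr rfl fun i _ => by simp [Complex.normSq_eq_conj_mul_self]

lemma abs_dot_le {r : ℕ} (a b : Fin r → ℂ) :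
    ‖star a ⬝ᵥ b‖ ≤ evnorm a * evnorm b := by
  have h := norm_inner_le_norm (𝕜 := ℂ) ((WithLp.equiv 2 (Fin r → ℂ)).symm a)
    ((WithLp.equiv 2 (Fin r → ℂ)).symm b)
  have e : inner ℂ ((WithLp.equiv 2 (Fin r → ℂ)).symm a) ((WithLp.equiv 2 (Fin r → ℂ)).symm b)
      = star a ⬝ᵥ b := dotProduct_comm _ _
  rw [e] at h
  rw [evnorm_eq_norm, evnorm_eq_norm]
  simpa using h

variable {n : Type*} [Fintype n]

lemma dot_conjTranspose (M : Matrix n n ℂ) (x : n → ℂ) :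
    star x ⬝ᵥ Mᴴ *ᵥ x = star (star x ⬝ᵥ M *ᵥ x) := by
  rw [dotProduct_mulVec, ← star_mulVec, star_dotProduct]

lemma dot_matIm (M : Matrix n n ℂ) (x : n → ℂ) :
    star x ⬝ᵥ (matIm M) *ᵥ x = ((star x ⬝ᵥ M *ᵥ x).im : ℂ) := by
  rw [matIm, smul_mulVec, dotProduct_smul, sub_mulVec, dotProduct_sub,
    dot_conjTranspose, Complex.star_def, Complex.sub_conj, smul_eq_mul]
  have : (2 : ℂ) * Complex.I ≠ 0 := by simp [Complex.I_ne_zero]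
  field_simp
  push_cast; ring

omit [Fintype n] in
lemma matIm_conj (M P : Matrix n n ℂ) [Fintype n] :
    matIm (Pᴴ * M * P) = Pᴴ * matIm M * P := by
  simp only [matIm, conjTranspose_mul, conjTranspose_conjTranspose, Matrix.mul_smul,
    Matrix.smul_mul, mul_sub, sub_mul, Matrix.mul_assoc]

lemma dot_conj_transfer (J X : Matrix n n ℂ) (hJ : Jᴴ = J) (b g : n → ℂ) :
    b ⬝ᵥ (J * X * J) *ᵥ g = star (J *ᵥ star b) ⬝ᵥ X *ᵥ (J *ᵥ g) := by
  rw [star_mulVec, star_star, hJ, ← mulVec_mulVec, ← mulVec_mulVec, dotProduct_mulVec]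

lemma entry00 {r : ℕ} (β : Matrix (Fin 1) (Fin r) ℂ) (γ : Matrix (Fin r) (Fin 1) ℂ)
    (M : Matrix (Fin r) (Fin r) ℂ) :
    (β * M * γ) 0 0 = (fun i => β 0 i) ⬝ᵥ M *ᵥ (fun i => γ i 0) := by
  simp only [mul_apply, dotProduct, mulVec, Finset.sum_mul, Finset.mul_sum]
  rw [Finset.sum_comm]
  exact Finset.sum_congr rfl fun i _ => Finset.sum_congr rfl fun j _ => by ring

lemma vecMulVec_mulVec' {r : ℕ} (w q x : Fin r → ℂ) :
    (vecMulVec w q) *ᵥ x = (q ⬝ᵥ x) • w := by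
  ext i
  simp only [mulVec, dotProduct, vecMulVec_apply, Pi.smul_apply, smul_eq_mul,
    Finset.sum_mul]
  exact Finset.sum_congr rfl fun j _ => by ring

variable [DecidableEq n]

lemma one_sub_T (B' : Matrix n n ℂ) :
    (1 : Matrix n n ℂ) - (1 + (2 * Complex.I) • B')ᴴ * (1 + (2 * Complex.I) • B')
      = (4 : ℂ) • (matIm B' - B'ᴴ * B') := by
  simp only [matIm, conjTranspose_add, conjTranspose_smul, conjTranspose_one,
    Complex.star_def, _root_.map_mul, Complex.conj_I, Complex.conj_ofNat,
    add_mul, mul_add, Matrix.smul_mul, Matrix.mul_smul, Matrix.one_mul, Matrix.mul_one,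
    smul_smul, smul_sub]
  match_scalars <;> (try field_simp) <;> (try ring_nf) <;> (try simp [Complex.I_sq]) <;>
    try norm_num

lemma Bp_eq (B' : Matrix n n ℂ) :
    (Complex.I / 2) • ((1 : Matrix n n ℂ) - (1 + (2 * Complex.I) • B')) = B' := by
  match_scalars <;> (try field_simp) <;> (try ring_nf) <;> (try simp [Complex.I_sq]) <;>
    try norm_num

lemma Tp_eq (T : Matrix n n ℂ) :
    1 + (2 * Complex.I) • ((Complex.I / 2) • ((1 : Matrix n n ℂ) - T)) = T := by
  match_scalars <;> (try field_simp) <;> (try ring_nf) <;> (try simp [Complex.I_sq]) <;>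
    try norm_num


lemma inv_one_sub (δ A : Matrix n n ℂ) (hδ : (matIm δ).PosDef)
    (hA : (matIm A).PosSemidef) : IsUnit (1 - δ * A) := by
  rw [Matrix.isUnit_iff_isUnit_det, isUnit_iff_ne_zero]
  intro hdet
  obtain ⟨x, hx, hx0⟩ := (Matrix.exists_mulVec_eq_zero_iff).mpr hdet
  set y := A *ᵥ x with hy
  have hxy : x = δ *ᵥ y := by
    have : (1 - δ * A) *ᵥ x = x - δ *ᵥ y := by
      rw [sub_mulVec, one_mulVec, ← mulVec_mulVec]
    rw [this] at hx0
    linear_combination (norm := module) hx0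
  have hyne : y ≠ 0 := by
    intro h
    rw [h, mulVec_zero] at hxy
    exact hx hxy
  have h1 : 0 ≤ ((star x ⬝ᵥ A *ᵥ x).im : ℂ) := by
    rw [← dot_matIm]; exact hA.dotProduct_mulVec_nonneg x
  have h2 : 0 < ((star y ⬝ᵥ δ *ᵥ y).im : ℂ) := by
    rw [← dot_matIm]; exact hδ.dotProduct_mulVec_pos hyne
  have h3 : star x ⬝ᵥ A *ᵥ x = star (star y ⬝ᵥ δ *ᵥ y) := by
    rw [← hy, ← dot_conjTranspose]
    rw [hxy, star_mulVec, ← dotProduct_mulVec]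
  rw [h3] at h1
  rw [Complex.zero_le_real] at h1
  rw [Complex.zero_lt_real] at h2
  simp only [Complex.star_def, Complex.conj_im] at h1
  linarith

lemma inv_one_add (δ B : Matrix n n ℂ)
    (hB : (matIm B - Bᴴ * matIm δ * B).PosDef) : IsUnit (1 + δ * B) := by
  rw [Matrix.isUnit_iff_isUnit_det, isUnit_iff_ne_zero]
  intro hdet
  obtain ⟨x, hx, hx0⟩ := (Matrix.exists_mulVec_eq_zero_iff).mpr hdet
  set y := B *ᵥ x with hy
  have hxy : x = -(δ *ᵥ y) := by
    have : (1 + δ * B) *ᵥ x = x + δ *ᵥ y := by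
      rw [add_mulVec, one_mulVec, ← mulVec_mulVec]
    rw [this] at hx0
    linear_combination (norm := module) hx0
  have hquad : 0 < star x ⬝ᵥ (matIm B) *ᵥ x - star y ⬝ᵥ (matIm δ) *ᵥ y := by
    have h := hB.dotProduct_mulVec_pos hx
    have e : star x ⬝ᵥ (Bᴴ * matIm δ * B) *ᵥ x = star y ⬝ᵥ (matIm δ) *ᵥ y := by
      rw [← mulVec_mulVec, ← mulVec_mulVec, dotProduct_mulVec, ← star_mulVec, ← hy]
    rwa [sub_mulVec, dotProduct_sub, e] at h
  have h3 : star x ⬝ᵥ B *ᵥ x = -star (star y ⬝ᵥ δ *ᵥ y) := by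
    rw [← hy, ← dot_conjTranspose]
    rw [hxy, star_neg, neg_dotProduct, star_mulVec, ← dotProduct_mulVec]
  rw [dot_matIm, dot_matIm, h3] at hquad
  simp only [Complex.star_def, Complex.conj_im, Complex.neg_im, neg_neg] at hquad
  rw [← Complex.ofReal_sub, Complex.zero_lt_real] at hquad
  linarith

lemma core_identity (δ A : Matrix n n ℂ) (h : IsUnit (1 - δ * A)) :
    matIm (A * (1 - δ * A)⁻¹) -
      (A * (1 - δ * A)⁻¹)ᴴ * matIm δ * (A * (1 - δ * A)⁻¹)
      = ((1 - δ * A)⁻¹)ᴴ * matIm A * ((1 - δ * A)⁻¹) := by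
  have hdet : IsUnit (1 - δ * A).det := (Matrix.isUnit_iff_isUnit_det _).mp h
  set C := (1 - δ * A)⁻¹ with hC
  have h1 : (1 - δ * A) * C = 1 := Matrix.mul_nonsing_inv _ hdet
  have r1 : C = 1 + δ * (A * C) := by
    calc C = (1 - δ * A) * C + δ * (A * C) := by noncomm_ring
    _ = 1 + δ * (A * C) := by rw [h1]
  have r2 : Cᴴ = 1 + (A * C)ᴴ * δᴴ := by
    calc Cᴴ = ((1 - δ * A) * C)ᴴ + (A * C)ᴴ * δᴴ := by
          simp only [conjTranspose_mul, conjTranspose_sub, conjTranspose_one]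
          noncomm_ring
    _ = 1 + (A * C)ᴴ * δᴴ := by rw [h1, conjTranspose_one]
  have e1 : Cᴴ * (A * C) = A * C + (A * C)ᴴ * δᴴ * (A * C) := by
    conv_lhs => rw [show Cᴴ * (A * C) = (1 + (A * C)ᴴ * δᴴ) * (A * C) from by
      rw [← r2]]
    noncomm_ring
  have e2 : (A * C)ᴴ * C = (A * C)ᴴ + (A * C)ᴴ * (δ * (A * C)) := by
    conv_lhs => rw [show (A * C)ᴴ * C = (A * C)ᴴ * (1 + δ * (A * C)) from by
      rw [← r1]]
    noncomm_ring
  simp only [matIm, Matrix.mul_smul, Matrix.smul_mul, ← smul_sub]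
  congr 1
  calc A * C - (A * C)ᴴ - (A * C)ᴴ * (δ - δᴴ) * (A * C)
      = Cᴴ * (A * C) - (A * C)ᴴ * δᴴ * (A * C)
        - ((A * C)ᴴ * C - (A * C)ᴴ * (δ * (A * C)))
        - (A * C)ᴴ * (δ - δᴴ) * (A * C) := by rw [e1, e2]; noncomm_ring
    _ = Cᴴ * (A - Aᴴ) * C := by
        simp only [conjTranspose_mul]
        noncomm_ring

end Helpers

section Helpers2
variable {r : ℕ}

lemma dot_one_sub (T : Matrix (Fin r) (Fin r) ℂ) (x : Fin r → ℂ) :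
    star x ⬝ᵥ (1 - Tᴴ * T) *ᵥ x
      = ((evnorm x ^ 2 - evnorm (T *ᵥ x) ^ 2 : ℝ) : ℂ) := by
  rw [sub_mulVec, dotProduct_sub, one_mulVec, dot_self_eq,
    ← mulVec_mulVec, dotProduct_mulVec, ← star_mulVec, dot_self_eq]
  push_cast; ring

lemma contraction_mulVec {T : Matrix (Fin r) (Fin r) ℂ}
    (hT : (1 - Tᴴ * T).PosSemidef) (x : Fin r → ℂ) :
    evnorm (T *ᵥ x) ≤ evnorm x := by
  have h := hT.dotProduct_mulVec_nonneg x
  rw [dot_one_sub, Complex.zero_le_real] at h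
  nlinarith [evnorm_nonneg x, evnorm_nonneg (T *ᵥ x)]

lemma posDef_one_sub {T : Matrix (Fin r) (Fin r) ℂ} {θ : ℝ} (hθ0 : 0 ≤ θ) (hθ : θ < 1)
    (h : ∀ x, evnorm (T *ᵥ x) ≤ θ * evnorm x) : (1 - Tᴴ * T).PosDef := by
  refine Matrix.PosDef.of_dotProduct_mulVec_pos ?_ ?_
  · unfold Matrix.IsHermitian
    rw [conjTranspose_sub, conjTranspose_mul, conjTranspose_conjTranspose, conjTranspose_one]
  · intro x hx
    rw [dot_one_sub, Complex.zero_lt_real]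
    have hxpos : 0 < evnorm x := by
      rcases (evnorm_nonneg x).lt_or_eq with h' | h'
      · exact h'
      · exact absurd ((evnorm_eq_zero (a := x)).mp h'.symm) hx
    have h2 : evnorm (T *ᵥ x) ^ 2 ≤ (θ * evnorm x) ^ 2 :=
      pow_le_pow_left₀ (evnorm_nonneg _) (h x) 2
    have h3 : (θ * evnorm x) ^ 2 = θ ^ 2 * evnorm x ^ 2 := by ring
    have h5 : θ ^ 2 < 1 := by nlinarith
    have hx2 : 0 < evnorm x ^ 2 := pow_pos hxpos 2
    have h4 : θ ^ 2 * evnorm x ^ 2 < 1 * evnorm x ^ 2 := mul_lt_mul_of_pos_right h5 hx2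
    linarith

lemma posDef_conj {N P : Matrix (Fin r) (Fin r) ℂ} (hN : N.PosDef) (hP : IsUnit P.det) :
    (Pᴴ * N * P).PosDef := by
  refine Matrix.PosDef.of_dotProduct_mulVec_pos ?_ ?_
  · unfold Matrix.IsHermitian
    rw [conjTranspose_mul, conjTranspose_mul, conjTranspose_conjTranspose, hN.1.eq,
      Matrix.mul_assoc]
  · intro x hx
    have hPx : P *ᵥ x ≠ 0 := by
      intro h0
      exact hx (Matrix.eq_zero_of_mulVec_eq_zero hP.ne_zero h0)
    have e : star x ⬝ᵥ (Pᴴ * N * P) *ᵥ x = star (P *ᵥ x) ⬝ᵥ N *ᵥ (P *ᵥ x) := by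
      rw [← mulVec_mulVec, ← mulVec_mulVec, dotProduct_mulVec, ← star_mulVec]
    rw [e]
    exact hN.dotProduct_mulVec_pos hPx

lemma posDef_smul {N : Matrix (Fin r) (Fin r) ℂ} (hN : N.PosDef) {t : ℝ} (ht : 0 < t) :
    (((t : ℂ)) • N).PosDef := by
  refine Matrix.PosDef.of_dotProduct_mulVec_pos ?_ ?_
  · unfold Matrix.IsHermitian
    rw [conjTranspose_smul, hN.1.eq]
    congr 1
    simp [Complex.star_def]
  · intro x hx
    rw [smul_mulVec, dotProduct_smul, smul_eq_mul]
    exact mul_pos (Complex.zero_lt_real.mpr ht) (hN.dotProduct_mulVec_pos hx)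

end Helpers2

/-- The Weyl set is a closed disc with explicit center and radius. -/
theorem weyl_set_is_closed_disc {r : ℕ} (hr : 1 ≤ r) (α : ℂ)
    (β : Matrix (Fin 1) (Fin r) ℂ) (γ : Matrix (Fin r) (Fin 1) ℂ)
    (δ : Matrix (Fin r) (Fin r) ℂ) (hI : (matIm δ).PosDef) :
    (∀ A : Matrix (Fin r) (Fin r) ℂ, (matIm A).PosSemidef → IsUnit (1 - δ * A)) ∧
    closure {w : ℂ | ∃ A : Matrix (Fin r) (Fin r) ℂ, (matIm A).PosSemidef ∧
        w = α + (β * A * (1 - δ * A)⁻¹ * γ) 0 0} =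
      Metric.closedBall
        (α + (Complex.I / 2) * (β * (matIm δ)⁻¹ * γ) 0 0)
        ((1 / 2) *
          evnorm ((hI.posSemidef.sqrt)⁻¹.mulVec fun i => star (β 0 i)) *
          evnorm ((hI.posSemidef.sqrt)⁻¹.mulVec fun i => γ i 0)) := by
  classical
  refine ⟨fun A hA => inv_one_sub δ A hI hA, ?_⟩
  set I : Matrix (Fin r) (Fin r) ℂ := matIm δ with hIdef
  set S : Matrix (Fin r) (Fin r) ℂ := hI.posSemidef.sqrt with hSdef
  have hS2 : S * S = I := hI.posSemidef.sqrt_mul_self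
  have hSH : Sᴴ = S := hI.posSemidef.sqrt_conjTranspose
  have hIdet : IsUnit I.det := (Matrix.isUnit_iff_isUnit_det I).mp hI.isUnit
  have hSdet : IsUnit S.det := by
    apply isUnit_of_mul_isUnit_left (y := S.det)
    rw [← det_mul, hS2]; exact hIdet
  set J : Matrix (Fin r) (Fin r) ℂ := S⁻¹ with hJdef
  have hJS : J * S = 1 := Matrix.nonsing_inv_mul _ hSdet
  have hSJ : S * J = 1 := Matrix.mul_nonsing_inv _ hSdet
  have hJdet : IsUnit J.det := Matrix.isUnit_nonsing_inv_det _ hSdet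
  have hJH : Jᴴ = J := by rw [hJdef, Matrix.conjTranspose_nonsing_inv, hSH]
  have hIinv : I⁻¹ = J * J := by rw [← hS2, Matrix.mul_inv_rev]
  have hJIJ : J * I * J = 1 := by
    rw [← hS2, show J * (S * S) * J = (J * S) * (S * J) from by noncomm_ring,
      hJS, hSJ, Matrix.one_mul]
  set u : Fin r → ℂ := J *ᵥ fun i => star (β 0 i) with hudef
  set v : Fin r → ℂ := J *ᵥ fun i => γ i 0 with hvdef
  set cC : ℂ := α + (Complex.I / 2) * (β * I⁻¹ * γ) 0 0 with hcC
  set ρ : ℝ := (1 / 2) * evnorm u * evnorm v with hρ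
  have transfer : ∀ X : Matrix (Fin r) (Fin r) ℂ,
      (fun i => β 0 i) ⬝ᵥ (J * X * J) *ᵥ (fun i => γ i 0) = star u ⬝ᵥ X *ᵥ v := by
    intro X
    rw [dot_conj_transfer J X hJH]
    rfl
  have hcen : (β * I⁻¹ * γ) 0 0 = star u ⬝ᵥ v := by
    rw [entry00, hIinv, show J * J = J * 1 * J from by rw [Matrix.mul_one],
      transfer, one_mulVec]
  have hWform : ∀ B : Matrix (Fin r) (Fin r) ℂ,
      α + (β * B * γ) 0 0 - cC
        = -(Complex.I / 2) * (star u ⬝ᵥ (1 + (2 * Complex.I) • (S * B * S)) *ᵥ v) := by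
    intro B
    have hBJ : B = J * (S * B * S) * J := by
      rw [show J * (S * B * S) * J = (J * S) * B * (S * J) from by noncomm_ring,
        hJS, hSJ, Matrix.one_mul, Matrix.mul_one]
    have hB' : S * B * S
        = (Complex.I / 2) • ((1 : Matrix (Fin r) (Fin r) ℂ)
            - (1 + (2 * Complex.I) • (S * B * S))) := (Bp_eq _).symm
    calc α + (β * B * γ) 0 0 - cC
        = α + (β * (J * (S * B * S) * J) * γ) 0 0 - cC := by rw [← hBJ]
      _ = α + star u ⬝ᵥ (S * B * S) *ᵥ v - cC := by rw [entry00, transfer]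
      _ = -(Complex.I / 2) * (star u ⬝ᵥ (1 + (2 * Complex.I) • (S * B * S)) *ᵥ v) := by
          conv_lhs => rw [hB']
          rw [smul_mulVec, dotProduct_smul, smul_eq_mul, sub_mulVec, one_mulVec,
            dotProduct_sub, hcC, hcen]
          ring
  -- forward inclusion
  have hsub : {w : ℂ | ∃ A : Matrix (Fin r) (Fin r) ℂ, (matIm A).PosSemidef ∧
      w = α + (β * A * (1 - δ * A)⁻¹ * γ) 0 0} ⊆ Metric.closedBall cC ρ := by
    rintro w ⟨A, hA, rfl⟩
    have hU : IsUnit (1 - δ * A) := inv_one_sub δ A hI hA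
    set B := A * (1 - δ * A)⁻¹ with hBdef
    have hassoc : β * A * (1 - δ * A)⁻¹ * γ = β * B * γ := by
      rw [hBdef, Matrix.mul_assoc β A]
    have hMB : (matIm B - Bᴴ * I * B).PosSemidef := by
      rw [hBdef, hIdef, core_identity δ A hU]
      exact hA.conjTranspose_mul_mul_same _
    have hT : (1 - (1 + (2 * Complex.I) • (S * B * S))ᴴ
        * (1 + (2 * Complex.I) • (S * B * S))).PosSemidef := by
      rw [one_sub_T]
      have e1 : matIm (S * B * S) = S * matIm B * S := by
        rw [show S * B * S = Sᴴ * B * S from by rw [hSH], matIm_conj, hSH]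
      have e2 : (S * B * S)ᴴ * (S * B * S) = S * (Bᴴ * I * B) * S := by
        rw [conjTranspose_mul, conjTranspose_mul, hSH, ← hS2]
        noncomm_ring
      have e : matIm (S * B * S) - (S * B * S)ᴴ * (S * B * S)
          = Sᴴ * (matIm B - Bᴴ * I * B) * S := by
        rw [e1, e2, hSH]
        noncomm_ring
      have e4 : (4 : ℂ) • (Sᴴ * (matIm B - Bᴴ * I * B) * S)
          = ((2 : ℂ) • S)ᴴ * (matIm B - Bᴴ * I * B) * ((2 : ℂ) • S) := by
        rw [conjTranspose_smul, Matrix.smul_mul, Matrix.mul_smul, Matrix.smul_mul,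
          smul_smul]
        norm_num
      rw [e, e4]
      exact hMB.conjTranspose_mul_mul_same _
    rw [Metric.mem_closedBall, Complex.dist_eq, hassoc, hWform B]
    rw [norm_mul, norm_neg]
    have habsI : ‖Complex.I / 2‖ = 1 / 2 := by
      rw [norm_div, Complex.norm_I, Complex.norm_two]
    rw [habsI]
    have hb1 : ‖star u ⬝ᵥ (1 + (2 * Complex.I) • (S * B * S)) *ᵥ v‖
        ≤ evnorm u * evnorm ((1 + (2 * Complex.I) • (S * B * S)) *ᵥ v) :=
      abs_dot_le _ _
    have hb2 : evnorm ((1 + (2 * Complex.I) • (S * B * S)) *ᵥ v) ≤ evnorm v :=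
      contraction_mulVec hT v
    have := evnorm_nonneg u
    have := evnorm_nonneg v
    have := evnorm_nonneg ((1 + (2 * Complex.I) • (S * B * S)) *ᵥ v)
    rw [hρ]
    nlinarith [norm_nonneg (star u ⬝ᵥ (1 + (2 * Complex.I) • (S * B * S)) *ᵥ v)]
  -- reverse inclusion helper: interior points are attained
  have hmem : ∀ s : ℂ, ‖s‖ < ρ ∨ s = 0 →
      (cC + s) ∈ {w : ℂ | ∃ A : Matrix (Fin r) (Fin r) ℂ, (matIm A).PosSemidef ∧
        w = α + (β * A * (1 - δ * A)⁻¹ * γ) 0 0} := by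
    intro s hs
    obtain ⟨T, hTdot, hTpos⟩ : ∃ T : Matrix (Fin r) (Fin r) ℂ,
        star u ⬝ᵥ T *ᵥ v = 2 * Complex.I * s ∧ (1 - Tᴴ * T).PosDef := by
      rcases hs with hlt | rfl
      · have hρpos : 0 < ρ := lt_of_le_of_lt (norm_nonneg s) hlt
        have hu0 : 0 < evnorm u := by
          rcases (evnorm_nonneg u).lt_or_eq with h' | h'
          · exact h'
          · rw [hρ, ← h'] at hρpos; simp at hρpos
        have hv0 : 0 < evnorm v := by
          rcases (evnorm_nonneg v).lt_or_eq with h' | h'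
          · exact h'
          · rw [hρ, ← h'] at hρpos; simp at hρpos
        set k : ℂ := (2 * Complex.I * s) /
          (((evnorm u : ℝ) : ℂ) ^ 2 * ((evnorm v : ℝ) : ℂ) ^ 2) with hk
        refine ⟨k • vecMulVec u (star v), ?_, ?_⟩
        · rw [smul_mulVec, vecMulVec_mulVec', dotProduct_smul, dotProduct_smul,
            smul_eq_mul, smul_eq_mul, dot_self_eq u, dot_self_eq v]
          have hun : ((evnorm u : ℝ) : ℂ) ≠ 0 := by
            simpa using ne_of_gt hu0
          have hvn : ((evnorm v : ℝ) : ℂ) ≠ 0 := by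
            simpa using ne_of_gt hv0
          push_cast
          rw [hk, div_mul_eq_mul_div, div_eq_iff
            (mul_ne_zero (pow_ne_zero _ hun) (pow_ne_zero _ hvn))]
          ring
        · have habsk : ‖k‖ = 2 * ‖s‖ / (evnorm u ^ 2 * evnorm v ^ 2) := by
            rw [hk, norm_div, norm_mul, norm_mul, norm_mul,
              norm_pow, norm_pow, Complex.norm_two, Complex.norm_I, mul_one,
              Complex.norm_real, Complex.norm_real,
              Real.norm_of_nonneg (evnorm_nonneg u), Real.norm_of_nonneg (evnorm_nonneg v)]
          set θ : ℝ := ‖k‖ * evnorm v * evnorm u with hθdef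
          have hθ0 : 0 ≤ θ := by
            apply mul_nonneg (mul_nonneg (norm_nonneg k) (evnorm_nonneg v))
              (evnorm_nonneg u)
          have hθ1 : θ < 1 := by
            rw [hθdef, habsk]
            rw [div_mul_eq_mul_div, div_mul_eq_mul_div, div_lt_one (by positivity)]
            rw [hρ] at hlt
            nlinarith
          apply posDef_one_sub hθ0 hθ1
          intro x
          rw [smul_mulVec, vecMulVec_mulVec', smul_smul, evnorm_smul, norm_mul]
          have hcs : ‖star v ⬝ᵥ x‖ ≤ evnorm v * evnorm x := abs_dot_le v x
          have h1 : ‖k‖ * ‖star v ⬝ᵥ x‖ * evnorm u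
              ≤ ‖k‖ * (evnorm v * evnorm x) * evnorm u := by
            have := norm_nonneg k
            have := evnorm_nonneg u
            nlinarith
          calc ‖k‖ * ‖star v ⬝ᵥ x‖ * evnorm u
              ≤ ‖k‖ * (evnorm v * evnorm x) * evnorm u := h1
            _ = θ * evnorm x := by rw [hθdef]; ring
      · exact ⟨0, by simp, by simpa using (Matrix.PosDef.one :
          ((1 : Matrix (Fin r) (Fin r) ℂ)).PosDef)⟩
    -- build A from T
    set B' : Matrix (Fin r) (Fin r) ℂ :=
      (Complex.I / 2) • ((1 : Matrix (Fin r) (Fin r) ℂ) - T) with hB'def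
    have hTeq : 1 + (2 * Complex.I) • B' = T := Tp_eq T
    set B : Matrix (Fin r) (Fin r) ℂ := J * B' * J with hBdef
    have hMBpos : (matIm B - Bᴴ * I * B).PosDef := by
      have e1 : matIm B = J * matIm B' * J := by
        rw [hBdef, show J * B' * J = Jᴴ * B' * J from by rw [hJH], matIm_conj, hJH]
      have e2 : Bᴴ * I * B = J * (B'ᴴ * B') * J := by
        rw [hBdef, conjTranspose_mul, conjTranspose_mul, hJH]
        have e : J * (B'ᴴ * J) * I * (J * B' * J)
            = J * (B'ᴴ * (J * I * J) * B') * J := by noncomm_ring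
        rw [e, hJIJ, Matrix.mul_one]
      have e3 : matIm B - Bᴴ * I * B = Jᴴ * (matIm B' - B'ᴴ * B') * J := by
        rw [e1, e2, hJH]
        noncomm_ring
      rw [e3]
      apply posDef_conj _ hJdet
      have h4 : (4 : ℂ) • (matIm B' - B'ᴴ * B') = 1 - Tᴴ * T := by
        rw [← one_sub_T, hTeq]
      have h5 := posDef_smul hTpos (t := (4 : ℝ)⁻¹) (by norm_num)
      rw [← h4, smul_smul] at h5
      have h6 : ((((4 : ℝ)⁻¹ : ℝ)) : ℂ) * 4 = 1 := by norm_num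
      rw [h6, one_smul] at h5
      exact h5
    have hUB : IsUnit (1 + δ * B) := inv_one_add δ B hMBpos
    set D : Matrix (Fin r) (Fin r) ℂ := 1 + δ * B with hDdef
    have hDdet : IsUnit D.det := (Matrix.isUnit_iff_isUnit_det D).mp hUB
    set A : Matrix (Fin r) (Fin r) ℂ := B * D⁻¹ with hAdef
    have h1δA : 1 - δ * A = D⁻¹ := by
      have e : (D - δ * B) * D⁻¹ = 1 - δ * A := by
        rw [Matrix.sub_mul, Matrix.mul_nonsing_inv _ hDdet, hAdef, Matrix.mul_assoc]
      rw [← e, hDdef, add_sub_cancel_right, Matrix.one_mul]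
    have hUA : IsUnit (1 - δ * A) := by
      rw [h1δA]
      exact (Matrix.isUnit_nonsing_inv_iff).mpr hUB
    have hCinv : (1 - δ * A)⁻¹ = D := by
      rw [h1δA, Matrix.nonsing_inv_nonsing_inv _ hDdet]
    have hAC : A * (1 - δ * A)⁻¹ = B := by
      rw [hCinv, hAdef, Matrix.mul_assoc, Matrix.nonsing_inv_mul _ hDdet, Matrix.mul_one]
    have hImA : (matIm A).PosSemidef := by
      have hcore := core_identity δ A hUA
      rw [hAC, hCinv] at hcore
      have e : matIm A = (D⁻¹)ᴴ * (matIm B - Bᴴ * matIm δ * B) * D⁻¹ := by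
        rw [hcore]
        have e' : (D⁻¹)ᴴ * (Dᴴ * matIm A * D) * D⁻¹
            = (D * D⁻¹)ᴴ * matIm A * (D * D⁻¹) := by
          rw [conjTranspose_mul]
          noncomm_ring
        rw [e', Matrix.mul_nonsing_inv _ hDdet, conjTranspose_one, Matrix.one_mul,
          Matrix.mul_one]
      rw [e]
      exact (hMBpos.posSemidef).conjTranspose_mul_mul_same _
    refine ⟨A, hImA, ?_⟩
    have hSBS : S * B * S = B' := by
      rw [hBdef, show S * (J * B' * J) * S = (S * J) * B' * (J * S) from by noncomm_ring,
        hSJ, hJS, Matrix.one_mul, Matrix.mul_one]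
    have hW := hWform B
    rw [hSBS, hTeq, hTdot] at hW
    have hval2 : α + (β * B * γ) 0 0 = cC + s := by
      linear_combination hW - s * Complex.I_sq
    rw [show β * A * (1 - δ * A)⁻¹ * γ = β * (A * (1 - δ * A)⁻¹) * γ from by
      rw [Matrix.mul_assoc β A], hAC]
    exact hval2.symm
  -- conclude
  apply subset_antisymm
  · exact closure_minimal hsub Metric.isClosed_closedBall
  · intro t ht
    rw [Metric.mem_closedBall, Complex.dist_eq] at ht
    rcases eq_or_ne t cC with rfl | hne
    · exact subset_closure (by simpa using hmem 0 (Or.inr rfl))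
    · have htc : 0 < ‖t - cC‖ := norm_pos_iff.mpr (sub_ne_zero.mpr hne)
      have hfW : ∀ n : ℕ, cC + ((1 - ((n : ℝ) + 1)⁻¹ : ℝ) : ℂ) * (t - cC)
          ∈ {w : ℂ | ∃ A : Matrix (Fin r) (Fin r) ℂ, (matIm A).PosSemidef ∧
              w = α + (β * A * (1 - δ * A)⁻¹ * γ) 0 0} := by
        intro n
        apply hmem
        left
        have hpos : (0 : ℝ) < (n : ℝ) + 1 := by positivity
        have hinv1 : ((n : ℝ) + 1)⁻¹ ≤ 1 := by
          rw [inv_le_one_iff₀]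
          right
          linarith [Nat.cast_nonneg (α := ℝ) n]
        have hinv0 : 0 < ((n : ℝ) + 1)⁻¹ := by positivity
        rw [norm_mul, Complex.norm_real, Real.norm_of_nonneg (by linarith)]
        have hlt1 : (1 - ((n : ℝ) + 1)⁻¹) * ‖t - cC‖
            < 1 * ‖t - cC‖ :=
          mul_lt_mul_of_pos_right (by linarith) htc
        linarith
      have l1 : Filter.Tendsto (fun n : ℕ => ((n : ℝ) + 1)⁻¹)
          Filter.atTop (nhds 0) := by
        simpa [one_div] using tendsto_one_div_add_atTop_nhds_zero_nat (𝕜 := ℝ)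
      have l2 : Filter.Tendsto (fun n : ℕ => (1 - ((n : ℝ) + 1)⁻¹ : ℝ))
          Filter.atTop (nhds 1) := by
        simpa using l1.const_sub 1
      have l3 : Filter.Tendsto (fun n : ℕ => (((1 - ((n : ℝ) + 1)⁻¹ : ℝ)) : ℂ))
          Filter.atTop (nhds 1) := by
        have := (Complex.continuous_ofReal.tendsto 1).comp l2
        simpa [Function.comp_def] using this
      have l4 : Filter.Tendsto
          (fun n : ℕ => cC + (((1 - ((n : ℝ) + 1)⁻¹ : ℝ)) : ℂ) * (t - cC))
          Filter.atTop (nhds t) := by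
        have h := Filter.Tendsto.const_add cC (l3.mul_const (t - cC))
        rw [show cC + 1 * (t - cC) = t from by ring] at h
        exact h
      exact mem_closure_of_tendsto l4 (Filter.Eventually.of_forall hfW)

end
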